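/- If E ⊆ X is Caratheodory measurable with respect to μ*, then for every ε > 0 there exists a set B ∈ Ω with μ*(B △ E) < ε. -/
import Mathlib


open scoped symmDiff ENNReal
open Filter Set Topology

/-- The outer measure induced by `μ : Ω → ℝ≥0∞`:
`μ*(E) = inf { ∑ᵢ μ(Aᵢ) : E ⊆ ⋃ᵢ Aᵢ, each Aᵢ ∈ Ω }`. -/
noncomputable def muStar {X : Type*} (Ω : Set (Set X)) (μ : Set X → ℝ≥0∞) (E : Set X) : ℝ≥0∞ :=
  ⨅ (A : ℕ → Set X) (_ : ∀ i, A i ∈ Ω) (_ : E ⊆ ⋃ i, A i), ∑' i, μ (A i)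

/-- `S̃ = { S ⊆ X : ∃ (Bₙ) in Ω with μ*(Bₙ △ S) → 0 }`. -/
def Stilde {X : Type*} (Ω : Set (Set X)) (μ : Set X → ℝ≥0∞) : Set (Set X) :=
  {S | ∃ B : ℕ → Set X, (∀ n, B n ∈ Ω) ∧
    Tendsto (fun n => muStar Ω μ (B n ∆ S)) atTop (𝓝 0)}

lemma muStar_le_sum {X : Type*} (Ω : Set (Set X)) (μ : Set X → ℝ≥0∞) {S : Set X}
    {A : ℕ → Set X} (hA : ∀ i, A i ∈ Ω) (hS : S ⊆ ⋃ i, A i) :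
    muStar Ω μ S ≤ ∑' i, μ (A i) := by
  exact iInf_le_of_le A (iInf_le_of_le hA (iInf_le _ hS))

lemma muStar_mono {X : Type*} (Ω : Set (Set X)) (μ : Set X → ℝ≥0∞) {S T : Set X}
    (h : S ⊆ T) : muStar Ω μ S ≤ muStar Ω μ T := by
  refine le_iInf fun A => le_iInf fun hA => le_iInf fun hT =>
    muStar_le_sum Ω μ hA (h.trans hT)

lemma muStar_le_of_mem {X : Type*} (Ω : Set (Set X)) (μ : Set X → ℝ≥0∞)
    (hΩempty : ∅ ∈ Ω) (hμempty : μ ∅ = 0) {S : Set X} (hS : S ∈ Ω) :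
    muStar Ω μ S ≤ μ S := by
  have h := muStar_le_sum Ω μ (A := fun i => if i = 0 then S else ∅)
    (S := S) (fun i => by by_cases h : i = 0 <;> simp [h, hS, hΩempty])
    (by intro x hx; exact mem_iUnion.2 ⟨0, by simpa using hx⟩)
  calc muStar Ω μ S ≤ ∑' i, μ (if i = 0 then S else ∅) := h
    _ = μ S := by
        rw [tsum_eq_single 0]
        · simp
        · intro b hb; simp [hb, hμempty]

/-- If `E` is Caratheodory measurable with respect to `μ*`, then for every `ε > 0`
there exists `B ∈ Ω` with `μ*(B △ E) < ε`. -/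
theorem stmt_16 {X : Type*} (Ω : Set (Set X)) (μ : Set X → ℝ≥0∞)
    (hΩempty : ∅ ∈ Ω) (hΩuniv : Set.univ ∈ Ω)
    (hΩcompl : ∀ A ∈ Ω, Aᶜ ∈ Ω) (hΩunion : ∀ A ∈ Ω, ∀ B ∈ Ω, A ∪ B ∈ Ω)
    (hμempty : μ ∅ = 0) (hμfin : μ Set.univ < ⊤)
    (hμadd : ∀ A : ℕ → Set X, (∀ i, A i ∈ Ω) → Pairwise (Function.onFun Disjoint A) →
      (⋃ i, A i) ∈ Ω → μ (⋃ i, A i) = ∑' i, μ (A i))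
    (E : Set X)
    (hE : ∀ A : Set X, muStar Ω μ A = muStar Ω μ (A ∩ E) + muStar Ω μ (A ∩ Eᶜ)) :
    ∀ ε : ℝ≥0∞, 0 < ε → ∃ B ∈ Ω, muStar Ω μ (B ∆ E) < ε := by
  intro ε hε
  have hEfin : muStar Ω μ E < ⊤ :=
    lt_of_le_of_lt (le_trans (muStar_mono Ω μ (subset_univ E))
      (muStar_le_of_mem Ω μ hΩempty hμempty hΩuniv)) hμfin
  by_cases hεtop : ε = ⊤
  · refine ⟨∅, hΩempty, ?_⟩
    rw [hεtop]
    calc muStar Ω μ (∅ ∆ E) ≤ muStar Ω μ Set.univ :=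
          muStar_mono Ω μ (subset_univ _)
      _ ≤ μ Set.univ := muStar_le_of_mem Ω μ hΩempty hμempty hΩuniv
      _ < ⊤ := hμfin
  have hε2 : (0 : ℝ≥0∞) < ε / 2 := ENNReal.half_pos (ne_of_gt hε)
  have hlt : muStar Ω μ E < muStar Ω μ E + ε / 2 :=
    ENNReal.lt_add_right hEfin.ne (ne_of_gt hε2)
  obtain ⟨A, hA, hEA, hsum⟩ : ∃ A : ℕ → Set X, (∀ i, A i ∈ Ω) ∧
      E ⊆ ⋃ i, A i ∧ ∑' i, μ (A i) < muStar Ω μ E + ε / 2 := by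
    have h := hlt
    conv_lhs at h => rw [muStar]
    simp only [iInf_lt_iff] at h
    obtain ⟨A, hA, hS, hlt'⟩ := h
    exact ⟨A, hA, hS, hlt'⟩
  have hsum_ne : ∑' i, μ (A i) ≠ ⊤ :=
    (lt_of_lt_of_le hsum (le_top.trans_eq rfl)).ne ∘ fun h => h ▸ rfl
  have htail := ENNReal.tendsto_sum_nat_add (fun i => μ (A i)) hsum_ne
  obtain ⟨N, hN⟩ := (htail.eventually (gt_mem_nhds hε2)).exists
  have hBmem : ∀ n : ℕ, (⋃ i, ⋃ _ : i < n, A i) ∈ Ω := by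
    intro n
    induction n with
    | zero => simpa using hΩempty
    | succ n ih =>
      rw [Set.biUnion_lt_succ]
      exact hΩunion _ ih _ (hA n)
  set B : Set X := ⋃ i, ⋃ _ : i < N, A i with hBdef
  refine ⟨B, hBmem N, ?_⟩
  have hsplit : muStar Ω μ (B ∆ E) = muStar Ω μ (E \ B) + muStar Ω μ (B \ E) := by
    have h1 : (B ∆ E) ∩ E = E \ B := by
      ext x; simp only [symmDiff_def, mem_inter_iff, mem_union, mem_diff, mem_compl_iff,
        sup_eq_union]; tauto
    have h2 : (B ∆ E) ∩ Eᶜ = B \ E := by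
      ext x; simp only [symmDiff_def, mem_inter_iff, mem_union, mem_diff, mem_compl_iff,
        sup_eq_union]; tauto
    rw [hE (B ∆ E), h1, h2]
  have hb1 : muStar Ω μ (E \ B) ≤ ∑' k, μ (A (k + N)) := by
    refine muStar_le_sum Ω μ (fun k => hA _) ?_
    intro x hx
    obtain ⟨i, hi⟩ := mem_iUnion.1 (hEA hx.1)
    have hiN : N ≤ i := by
      by_contra h
      exact hx.2 (mem_iUnion.2 ⟨i, mem_iUnion.2 ⟨not_le.1 h, hi⟩⟩)
    exact mem_iUnion.2 ⟨i - N, by rwa [Nat.sub_add_cancel hiN]⟩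
  have hBsub : B ⊆ ⋃ i, A i := iUnion₂_subset fun i _ => subset_iUnion A i
  have hU : muStar Ω μ E + muStar Ω μ ((⋃ i, A i) \ E) < muStar Ω μ E + ε / 2 := by
    have h := hE (⋃ i, A i)
    rw [inter_eq_right.2 hEA, ← diff_eq] at h
    calc muStar Ω μ E + muStar Ω μ ((⋃ i, A i) \ E)
        = muStar Ω μ (⋃ i, A i) := h.symm
      _ ≤ ∑' i, μ (A i) := muStar_le_sum Ω μ hA subset_rfl
      _ < muStar Ω μ E + ε / 2 := hsum
  have hb2lt : muStar Ω μ ((⋃ i, A i) \ E) < ε / 2 :=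
    (ENNReal.add_lt_add_iff_left hEfin.ne).1 hU
  have hb2 : muStar Ω μ (B \ E) ≤ muStar Ω μ ((⋃ i, A i) \ E) :=
    muStar_mono Ω μ (diff_subset_diff_left hBsub)
  rw [hsplit]
  calc muStar Ω μ (E \ B) + muStar Ω μ (B \ E)
      < ε / 2 + ε / 2 := ENNReal.add_lt_add (lt_of_le_of_lt hb1 hN) (lt_of_le_of_lt hb2 hb2lt)
    _ = ε := ENNReal.add_halves ε
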